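/- Let r ≥ 2 and k ≥ 1, and set m = (r−1)k and N = (rk+1)(r−1). Let h : C → ℝ^k be a continuous map on the colorful subcomplex C such that the map f : C → σ^m × ℝ^k defined by f(x) = (p(x), h(x)) has no r-Tverberg point. Then the S_r-equivariant continuous map h̃ : X → (ℝ^k)^r defined by h̃(x_1,…,x_r) = (h(x_1),…,h(x_r)) avoids the thin diagonal {(z,…,z) : z ∈ ℝ^k}; consequently, there exists an S_r-equivariant continuous map X → S^{m−1}. -/

import Mathlib

open Set

noncomputable section

/-- The colorful subcomplex `C ⊆ σ^N`: points of the standard simplex on the vertex set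
`Fin r × Fin (m+1)` using at most one vertex from each color class `C_j`. -/
def colorfulComplex (r m : ℕ) : Set ((Fin r × Fin (m + 1)) → ℝ) :=
  {x | x ∈ stdSimplex ℝ (Fin r × Fin (m + 1)) ∧
    ∀ (j : Fin (m + 1)) (i i' : Fin r), 0 < x (i, j) → 0 < x (i', j) → i = i'}

/-- The projection `p : σ^N → σ^m`, `p(x)_j = Σ_i x(i,j)`. -/
def simplexProj (r m : ℕ) (x : (Fin r × Fin (m + 1)) → ℝ) : Fin (m + 1) → ℝ :=
  fun j => ∑ i, x (i, j)

/-- The deleted fiber product `X` of the colorful subcomplex: `r`-tuples of points of `C`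
with pairwise disjoint supports and equal projections. -/
def deletedFiberProd (r m : ℕ) : Set (Fin r → ((Fin r × Fin (m + 1)) → ℝ)) :=
  {x | (∀ i, x i ∈ colorfulComplex r m) ∧
    (Pairwise fun i i' => Disjoint {v | 0 < x i v} {v | 0 < x i' v}) ∧
    (∀ i i', simplexProj r m (x i) = simplexProj r m (x i'))}

/-- The sphere `S^{m-1} = {(z_1,…,z_r) ∈ (ℝ^k)^r : Σ z_i = 0, Σ ‖z_i‖² = 1}`. -/
def blockSphere (k r : ℕ) : Set (Fin r → EuclideanSpace ℝ (Fin k)) :=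
  {z | (∑ i, z i) = 0 ∧ (∑ i, ‖z i‖ ^ 2) = 1}

/-- necessity of the prismatic deleted product criterion: if
`h : C → ℝ^k` is continuous and the regular prismatic map `f = (p, h)` has no
`r`-Tverberg point, then the induced equivariant map `h̃ : X → (ℝ^k)^r`,
`h̃(x_1,…,x_r) = (h(x_1),…,h(x_r))`, avoids the thin diagonal, and consequently there is
an `S_r`-equivariant continuous map `X → S^{m-1}`. -/
theorem statement7 (r k : ℕ) (hr : 2 ≤ r) (hk : 1 ≤ k)
    (m : ℕ) (hm : m = (r - 1) * k)
    (h : ((Fin r × Fin (m + 1)) → ℝ) → EuclideanSpace ℝ (Fin k))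
    (hcont : ContinuousOn h (colorfulComplex r m))
    (hT : ¬ ∃ x : Fin r → ((Fin r × Fin (m + 1)) → ℝ),
        (∀ i, x i ∈ colorfulComplex r m) ∧
        (Pairwise fun i j => Disjoint {v | 0 < x i v} {v | 0 < x j v}) ∧
        (∀ i j, (simplexProj r m (x i), h (x i)) = (simplexProj r m (x j), h (x j)))) :
    (∀ x ∈ deletedFiberProd r m,
        ¬ ∃ z : EuclideanSpace ℝ (Fin k), ∀ i, h (x i) = z) ∧
    (∃ F : (Fin r → ((Fin r × Fin (m + 1)) → ℝ)) → (Fin r → EuclideanSpace ℝ (Fin k)),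
      ContinuousOn F (deletedFiberProd r m) ∧
      MapsTo F (deletedFiberProd r m) (blockSphere k r) ∧
      ∀ x ∈ deletedFiberProd r m, ∀ π : Equiv.Perm (Fin r),
        F (fun i => x (π i)) = fun i => F x (π i)) := by
  have hr0 : (r : ℝ) ≠ 0 := by positivity
  -- Part 1
  have part1 : ∀ x ∈ deletedFiberProd r m,
      ¬ ∃ z : EuclideanSpace ℝ (Fin k), ∀ i, h (x i) = z := by
    rintro x hx ⟨z, hz⟩
    exact hT ⟨x, hx.1, hx.2.1, fun i j => by
      rw [Prod.mk.injEq]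
      exact ⟨hx.2.2 i j, by rw [hz i, hz j]⟩⟩
  refine ⟨part1, ?_⟩
  set g : (Fin r → ((Fin r × Fin (m + 1)) → ℝ)) → Fin r → EuclideanSpace ℝ (Fin k) :=
    fun x i => h (x i) - (r : ℝ)⁻¹ • ∑ j, h (x j) with hg_def
  set S : (Fin r → ((Fin r × Fin (m + 1)) → ℝ)) → ℝ :=
    fun x => ∑ i, ‖g x i‖ ^ 2 with hS_def
  have hSnonneg : ∀ x, 0 ≤ S x := fun x => Finset.sum_nonneg fun i _ => by positivity
  have hSpos : ∀ x ∈ deletedFiberProd r m, 0 < S x := by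
    intro x hx
    rcases (hSnonneg x).lt_or_eq with hlt | heq
    · exact hlt
    · exfalso
      apply part1 x hx
      refine ⟨(r : ℝ)⁻¹ • ∑ j, h (x j), fun i => ?_⟩
      have hzero : ‖g x i‖ ^ 2 = 0 := by
        have := (Finset.sum_eq_zero_iff_of_nonneg
          (fun i _ => by positivity : ∀ i ∈ Finset.univ, (0:ℝ) ≤ ‖g x i‖ ^ 2)).mp heq.symm
        exact this i (Finset.mem_univ i)
      have : g x i = 0 := by
        have := pow_eq_zero_iff (n := 2) (by norm_num) |>.mp hzero
        simpa using this
      have := sub_eq_zero.mp this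
      simpa [hg_def] using this
  have hsum_g : ∀ x, ∑ i, g x i = 0 := by
    intro x
    simp only [hg_def, Finset.sum_sub_distrib, Finset.sum_const, Finset.card_univ,
      Fintype.card_fin]
    rw [sub_eq_zero, ← Nat.cast_smul_eq_nsmul ℝ, smul_smul, mul_inv_cancel₀ hr0, one_smul]
  -- continuity pieces
  have hcomp : ∀ i : Fin r, ContinuousOn (fun x : Fin r → ((Fin r × Fin (m + 1)) → ℝ) =>
      h (x i)) (deletedFiberProd r m) := by
    intro i
    exact hcont.comp (continuous_apply i).continuousOn fun x hx => hx.1 i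
  have hgcont : ∀ i, ContinuousOn (fun x => g x i) (deletedFiberProd r m) := by
    intro i
    exact (hcomp i).sub (ContinuousOn.fun_const_smul
      (continuousOn_finset_sum _ fun j _ => hcomp j) _)
  have hScont : ContinuousOn S (deletedFiberProd r m) :=
    continuousOn_finset_sum _ fun i _ => ((hgcont i).norm.pow 2)
  -- permutation invariance of g and S
  have hgperm : ∀ (x : Fin r → ((Fin r × Fin (m + 1)) → ℝ)) (π : Equiv.Perm (Fin r)) (i : Fin r),
      g (fun j => x (π j)) i = g x (π i) := by
    intro x π i
    simp only [hg_def]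
    congr 2
    exact Equiv.sum_comp π (fun j => h (x j))
  have hSperm : ∀ (x : Fin r → ((Fin r × Fin (m + 1)) → ℝ)) (π : Equiv.Perm (Fin r)),
      S (fun j => x (π j)) = S x := by
    intro x π
    simp only [hS_def]
    rw [← Equiv.sum_comp π (fun i => ‖g x i‖ ^ 2)]
    exact Finset.sum_congr rfl fun i _ => by rw [hgperm]
  refine ⟨fun x => fun i => (Real.sqrt (S x))⁻¹ • g x i, ?_, ?_, ?_⟩
  · refine continuousOn_pi.mpr fun i => ContinuousOn.fun_smul ?_ (hgcont i)
    refine ContinuousOn.inv₀ (Real.continuous_sqrt.comp_continuousOn hScont) ?_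
    intro x hx
    exact ne_of_gt (Real.sqrt_pos.mpr (hSpos x hx))
  · intro x hx
    have hS0 : 0 < S x := hSpos x hx
    constructor
    · rw [← Finset.smul_sum, hsum_g, smul_zero]
    · have : ∀ i, ‖(Real.sqrt (S x))⁻¹ • g x i‖ ^ 2 = (S x)⁻¹ * ‖g x i‖ ^ 2 := by
        intro i
        rw [norm_smul, mul_pow, Real.norm_eq_abs, abs_of_nonneg (by positivity),
          inv_pow, Real.sq_sqrt hS0.le]
      simp only [this, ← Finset.mul_sum]
      exact inv_mul_cancel₀ hS0.ne'
  · intro x hx π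
    funext i
    show (Real.sqrt (S fun j => x (π j)))⁻¹ • g (fun j => x (π j)) i = (Real.sqrt (S x))⁻¹ • g x (π i)
    rw [hSperm x π, hgperm x π i]
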